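/- Let (y, λ) ∈ ℝ^Q × ℝ₊ with (y, λ) ∉ H, and let x⋆ be a solution of (P_λ(y)) with D-support I, D-cosupport J and s = sign(D* x⋆). Suppose (H_J) holds. For (ȳ, λ̄) ∈ ℝ^Q × ℝ₊ define x̂(ȳ, λ̄) = A^[J] Φ* ȳ − λ̄ A^[J] D_I s_I. Then there exists an open neighborhood B ⊆ ℝ^Q × ℝ₊ of (y, λ) such that for every (ȳ, λ̄) ∈ B, the vector x̂(ȳ, λ̄) is a solution of (P_{λ̄}(ȳ)). -/

import Mathlib

open Matrix MeasureTheory ProbabilityTheory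

/-- The analysis lasso objective `L_{y,λ}(x) = (1/2)‖y − Φx‖₂² + λ‖D*x‖₁`. -/
noncomputable def lassoObj {N Q P : ℕ} (Φ : Matrix (Fin Q) (Fin N) ℝ)
    (D : Matrix (Fin N) (Fin P) ℝ) (y : Fin Q → ℝ) (lam : ℝ) (x : Fin N → ℝ) : ℝ :=
  (1 / 2) * ∑ i, (y i - Φ.mulVec x i) ^ 2 + lam * ∑ j, |Dᵀ.mulVec x j|

/-- `x` is a solution of `(P_λ(y))`, i.e. a global minimizer of the lasso objective. -/
def IsLassoSol {N Q P : ℕ} (Φ : Matrix (Fin Q) (Fin N) ℝ)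
    (D : Matrix (Fin N) (Fin P) ℝ) (y : Fin Q → ℝ) (lam : ℝ) (x : Fin N → ℝ) : Prop :=
  ∀ x' : Fin N → ℝ, lassoObj Φ D y lam x ≤ lassoObj Φ D y lam x'

/-- The cospace `G_J = Ker D_J^*`. -/
def GJ {N P : ℕ} (D : Matrix (Fin N) (Fin P) ℝ) (J : Set (Fin P)) :
    Submodule ℝ (Fin N → ℝ) where
  carrier := {x | ∀ j ∈ J, Dᵀ.mulVec x j = 0}
  add_mem' := by
    intro a b ha hb j hj
    simp [Matrix.mulVec_add, ha j hj, hb j hj]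
  zero_mem' := by intro j hj; simp
  smul_mem' := by
    intro c a ha j hj
    simp [Matrix.mulVec_smul, ha j hj]

/-- Condition `(H_J)`: `Ker Φ ∩ G_J = {0}`. -/
def HJcond {N Q P : ℕ} (Φ : Matrix (Fin Q) (Fin N) ℝ) (D : Matrix (Fin N) (Fin P) ℝ)
    (J : Set (Fin P)) : Prop :=
  ∀ x : Fin N → ℝ, Φ.mulVec x = 0 → x ∈ GJ D J → x = 0

/-- The columns of `U` form a basis of the subspace `G`. -/
def ColBasis {N r : ℕ} (U : Matrix (Fin N) (Fin r) ℝ) (G : Submodule ℝ (Fin N → ℝ)) : Prop :=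
  LinearIndependent ℝ (fun k : Fin r => (fun i => U i k)) ∧
  Submodule.span ℝ (Set.range (fun k : Fin r => (fun i => U i k))) = G

/-- The matrix `A^[J] = U (U* Φ* Φ U)⁻¹ U*` built from a basis matrix `U` of `G_J`. -/
noncomputable def AJmat {N Q r : ℕ} (Φ : Matrix (Fin Q) (Fin N) ℝ)
    (U : Matrix (Fin N) (Fin r) ℝ) : Matrix (Fin N) (Fin N) ℝ :=
  U * (Uᵀ * Φᵀ * Φ * U)⁻¹ * Uᵀ

/-- Orthogonal projection onto a subspace of `Fin n → ℝ` (Euclidean inner product). -/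
noncomputable def projG {n : ℕ} (G : Submodule ℝ (Fin n → ℝ)) (v : Fin n → ℝ) : Fin n → ℝ :=
  (EuclideanSpace.equiv (Fin n) ℝ)
    (Submodule.orthogonalProjection
      (G.map ((EuclideanSpace.equiv (Fin n) ℝ).symm.toLinearEquiv :
          (Fin n → ℝ) →ₗ[ℝ] EuclideanSpace ℝ (Fin n)))
      ((EuclideanSpace.equiv (Fin n) ℝ).symm v))

/-- `AJ` is a valid assignment of the matrix `A^[J]` to each `J` satisfying `(H_J)`;
the value of `A^[J]` does not depend on the choice of basis matrix `U`. -/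
def IsAJChoice {N Q P : ℕ} (Φ : Matrix (Fin Q) (Fin N) ℝ) (D : Matrix (Fin N) (Fin P) ℝ)
    (AJ : Set (Fin P) → Matrix (Fin N) (Fin N) ℝ) : Prop :=
  ∀ J : Set (Fin P), HJcond Φ D J →
    ∃ (r : ℕ) (U : Matrix (Fin N) (Fin r) ℝ), ColBasis U (GJ D J) ∧ AJ J = AJmat Φ U

/-- `Im D_S`: the span of the columns of `D` indexed by `S`, as a set of vectors. -/
def colSpan {N P : ℕ} (D : Matrix (Fin N) (Fin P) ℝ) (S : Set (Fin P)) : Set (Fin N → ℝ) :=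
  {w | ∃ v : Fin P → ℝ, (∀ i, i ∉ S → v i = 0) ∧ w = D.mulVec v}

/-- The transition space `H ⊆ ℝ^Q × ℝ₊`: union over `J` satisfying `(H_J)`, `K ⊆ J` with
`Im Π̃^[J] ⊄ Im D_{J∖K}`, and sign vectors `s` on `J^c` and `σ` on `K`, of the sets where
`Proj_{G_{J∖K}}(Π̃^[J] y) = Proj_{G_{J∖K}}(λ(C̃^[J] s_{J^c} − D_K σ_K))`. -/
noncomputable def transitionSpace {N Q P : ℕ} (Φ : Matrix (Fin Q) (Fin N) ℝ)
    (D : Matrix (Fin N) (Fin P) ℝ) (AJ : Set (Fin P) → Matrix (Fin N) (Fin N) ℝ) :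
    Set ((Fin Q → ℝ) × ℝ) :=
  {p | 0 ≤ p.2 ∧
    ∃ (J K : Set (Fin P)) (s σ : Fin P → ℝ),
      HJcond Φ D J ∧ K ⊆ J ∧
      ¬ (Set.range (Φᵀ * (Φ * AJ J * Φᵀ - 1)).mulVec ⊆ colSpan D (J \ K)) ∧
      (∀ i, i ∉ J → s i = 1 ∨ s i = -1) ∧ (∀ i ∈ J, s i = 0) ∧
      (∀ i ∈ K, σ i = 1 ∨ σ i = -1) ∧ (∀ i, i ∉ K → σ i = 0) ∧
      projG (GJ D (J \ K)) ((Φᵀ * (Φ * AJ J * Φᵀ - 1)).mulVec p.1)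
        = projG (GJ D (J \ K))
            (p.2 • ((Φᵀ * Φ * AJ J - 1).mulVec (D.mulVec s) - D.mulVec σ))}


section Helpers
open Matrix

lemma rsign_mul_self (x : ℝ) : Real.sign x * x = |x| := by
  rcases lt_trichotomy x 0 with h|h|h
  · rw [Real.sign_of_neg h, abs_of_neg h]; ring
  · simp [h]
  · rw [Real.sign_of_pos h, abs_of_pos h]; ring

lemma rabs_sign_le (x : ℝ) : |Real.sign x| ≤ 1 := by
  rcases lt_trichotomy x 0 with h|h|h
  · simp [Real.sign_of_neg h]
  · simp [h]
  · simp [Real.sign_of_pos h]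

lemma dot_transpose_mulVec {N Q : ℕ} (A : Matrix (Fin Q) (Fin N) ℝ) (v : Fin Q → ℝ)
    (w : Fin N → ℝ) : Aᵀ.mulVec v ⬝ᵥ w = v ⬝ᵥ A.mulVec w := by
  rw [Matrix.mulVec_transpose, ← Matrix.dotProduct_mulVec]

lemma dot_mulVec_right {N P : ℕ} (D : Matrix (Fin N) (Fin P) ℝ) (v : Fin P → ℝ)
    (w : Fin N → ℝ) : D.mulVec v ⬝ᵥ w = v ⬝ᵥ Dᵀ.mulVec w := by
  rw [← dot_transpose_mulVec, Matrix.transpose_transpose]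

lemma abs_add_small (x δ : ℝ) (h : |δ| ≤ |x|) : |x + δ| = |x| + Real.sign x * δ := by
  rcases lt_trichotomy x 0 with hx|hx|hx
  · rw [Real.sign_of_neg hx, abs_of_neg hx] at *
    rw [abs_of_nonpos (by cases abs_le.1 h; linarith)]; ring
  · have hδ : δ = 0 := abs_eq_zero.1 (le_antisymm (by simpa [hx] using h) (abs_nonneg δ))
    simp [hx, hδ]
  · rw [Real.sign_of_pos hx, abs_of_pos hx] at *
    rw [abs_of_nonneg (by cases abs_le.1 h; linarith)]; ring

/-- Sufficient optimality condition for the lasso. -/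
lemma lasso_suff {N Q P : ℕ} (Φ : Matrix (Fin Q) (Fin N) ℝ)
    (D : Matrix (Fin N) (Fin P) ℝ) (y : Fin Q → ℝ) (lam : ℝ) (hlam : 0 ≤ lam)
    (x : Fin N → ℝ)
    (u : Fin P → ℝ) (h1 : Φᵀ.mulVec (Φ.mulVec x - y) + lam • D.mulVec u = 0)
    (h2 : ∀ i, |u i| ≤ 1) (h3 : ∀ i, u i * Dᵀ.mulVec x i = |Dᵀ.mulVec x i|) :
    IsLassoSol Φ D y lam x := by
  intro x'
  unfold lassoObj
  set d : Fin N → ℝ := x' - x with hd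
  have hquad : (Φᵀ.mulVec (Φ.mulVec x - y)) ⬝ᵥ d ≤
      (1/2) * ∑ i, (y i - Φ.mulVec x' i) ^ 2 - (1/2) * ∑ i, (y i - Φ.mulVec x i) ^ 2 := by
    have hx' : Φ.mulVec x' = Φ.mulVec x + Φ.mulVec d := by
      rw [← Matrix.mulVec_add]; congr; simp [hd]
    rw [dot_transpose_mulVec]
    rw [dotProduct, hx']
    rw [Finset.mul_sum, Finset.mul_sum, ← Finset.sum_sub_distrib]
    apply Finset.sum_le_sum
    intro i _
    simp only [Pi.sub_apply, Pi.add_apply]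
    nlinarith [sq_nonneg (Φ.mulVec d i)]
  have hdot : (Φᵀ.mulVec (Φ.mulVec x - y)) ⬝ᵥ d = - (lam * (u ⬝ᵥ Dᵀ.mulVec d)) := by
    have h1' : Φᵀ.mulVec (Φ.mulVec x - y) = - (lam • D.mulVec u) := by
      linear_combination (norm := module) h1
    rw [h1', neg_dotProduct, smul_dotProduct, dot_mulVec_right]
    simp [smul_eq_mul]
  have hl1 : lam * (u ⬝ᵥ Dᵀ.mulVec d) ≤
      lam * ∑ j, |Dᵀ.mulVec x' j| - lam * ∑ j, |Dᵀ.mulVec x j| := by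
    have hDd : Dᵀ.mulVec d = Dᵀ.mulVec x' - Dᵀ.mulVec x := by
      rw [← Matrix.mulVec_sub]
    rw [← mul_sub]
    apply mul_le_mul_of_nonneg_left _ hlam
    rw [dotProduct, hDd, ← Finset.sum_sub_distrib]
    apply Finset.sum_le_sum
    intro j _
    simp only [Pi.sub_apply]
    have he : u j * (Dᵀ.mulVec x' j - Dᵀ.mulVec x j)
        = u j * Dᵀ.mulVec x' j - |Dᵀ.mulVec x j| := by rw [mul_sub, h3 j]
    rw [he]
    have hb : u j * Dᵀ.mulVec x' j ≤ |Dᵀ.mulVec x' j| := by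
      calc u j * Dᵀ.mulVec x' j ≤ |u j * Dᵀ.mulVec x' j| := le_abs_self _
      _ = |u j| * |Dᵀ.mulVec x' j| := abs_mul _ _
      _ ≤ 1 * |Dᵀ.mulVec x' j| := by
          apply mul_le_mul_of_nonneg_right (h2 j) (abs_nonneg _)
      _ = |Dᵀ.mulVec x' j| := one_mul _
    linarith
  have := hquad
  rw [hdot] at this
  linarith

/-- Variational inequality from optimality. -/
lemma lasso_varineq {N Q P : ℕ} (hP : 0 < P) (Φ : Matrix (Fin Q) (Fin N) ℝ)
    (D : Matrix (Fin N) (Fin P) ℝ) (y : Fin Q → ℝ) (lam : ℝ)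
    (xs : Fin N → ℝ) (hxs : IsLassoSol Φ D y lam xs) (h : Fin N → ℝ) :
    0 ≤ (Φᵀ.mulVec (Φ.mulVec xs - y) + lam • D.mulVec (fun i => Real.sign (Dᵀ.mulVec xs i))) ⬝ᵥ h
      + lam * ∑ j, (if Dᵀ.mulVec xs j = 0 then |Dᵀ.mulVec h j| else 0) := by
  haveI : Nonempty (Fin P) := ⟨⟨0, hP⟩⟩
  set a : Fin P → ℝ := Dᵀ.mulVec xs with ha
  set b : Fin P → ℝ := Dᵀ.mulVec h with hb
  set E : ℝ := ∑ i, (Φ.mulVec xs i - y i) * Φ.mulVec h i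
      + lam * ∑ j, Real.sign (a j) * b j
      + lam * ∑ j, (if a j = 0 then |b j| else 0) with hE
  set c : ℝ := ∑ i, (Φ.mulVec h i)^2 with hc
  have hcnn : 0 ≤ c := Finset.sum_nonneg fun i _ => sq_nonneg _
  set t0 : ℝ := Finset.univ.inf' Finset.univ_nonempty
      (fun j => if a j = 0 then 1 else |a j| / (|b j| + 1)) with ht0
  have ht0pos : 0 < t0 := by
    rw [ht0, Finset.lt_inf'_iff]
    intro j _
    split
    · norm_num
    · apply div_pos (abs_pos.2 (by assumption)) (by positivity)
  have key : ∀ t : ℝ, 0 < t → t ≤ t0 → 0 ≤ t * E + t^2 * ((1/2) * c) := by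
    intro t htpos htle
    have hmain := hxs (xs + t • h)
    unfold lassoObj at hmain
    have hΦ : ∀ i, Φ.mulVec (xs + t • h) i = Φ.mulVec xs i + t * Φ.mulVec h i := by
      intro i; rw [Matrix.mulVec_add, Matrix.mulVec_smul]; simp
    have hD : ∀ j, Dᵀ.mulVec (xs + t • h) j = a j + t * b j := by
      intro j; rw [Matrix.mulVec_add, Matrix.mulVec_smul]; simp [ha, hb]
    have hq : ∑ i, (y i - Φ.mulVec (xs + t • h) i)^2
        = ∑ i, (y i - Φ.mulVec xs i)^2
          + t * (2 * ∑ i, (Φ.mulVec xs i - y i) * Φ.mulVec h i) + t^2 * c := by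
      rw [hc, Finset.mul_sum, Finset.mul_sum, Finset.mul_sum, ← Finset.sum_add_distrib,
        ← Finset.sum_add_distrib]
      apply Finset.sum_congr rfl
      intro i _
      rw [hΦ i]; ring
    have hl1 : ∑ j, |Dᵀ.mulVec (xs + t • h) j|
        = ∑ j, |a j| + t * ∑ j, Real.sign (a j) * b j
          + t * ∑ j, (if a j = 0 then |b j| else 0) := by
      rw [Finset.mul_sum, Finset.mul_sum, ← Finset.sum_add_distrib, ← Finset.sum_add_distrib]
      apply Finset.sum_congr rfl
      intro j _
      rw [hD j]
      by_cases hj : a j = 0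
      · simp [hj, abs_mul, abs_of_pos htpos]
      · have hle : t0 ≤ |a j| / (|b j| + 1) := by
          have := Finset.inf'_le
            (f := fun j => if a j = 0 then 1 else |a j| / (|b j| + 1))
            (Finset.mem_univ j)
          rw [if_neg hj] at this; rw [ht0]; exact this
        have habs : |t * b j| ≤ |a j| := by
          rw [abs_mul, abs_of_pos htpos]
          calc t * |b j| ≤ (|a j| / (|b j| + 1)) * |b j| := by
                apply mul_le_mul_of_nonneg_right (le_trans htle hle) (abs_nonneg _)
          _ ≤ |a j| := by
                rw [div_mul_eq_mul_div, div_le_iff₀ (by positivity)]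
                nlinarith [abs_nonneg (a j), abs_nonneg (b j)]
        rw [abs_add_small _ _ habs, if_neg hj]; ring
    rw [hq, hl1] at hmain
    nlinarith [hmain]
  have hEnn : 0 ≤ E := by
    by_contra hneg
    push_neg at hneg
    set t : ℝ := min t0 (-E / (c + 1)) with htdef
    have htpos : 0 < t := lt_min ht0pos (by apply div_pos (by linarith) (by linarith))
    have h1 := key t htpos (min_le_left _ _)
    have h2 : t * (c+1) ≤ -E := by
      rw [← le_div_iff₀ (by linarith)]
      exact min_le_right _ _
    nlinarith
  have hconv : (Φᵀ.mulVec (Φ.mulVec xs - y) + lam • D.mulVec (fun i => Real.sign (a i))) ⬝ᵥ h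
      + lam * ∑ j, (if a j = 0 then |b j| else 0) = E := by
    rw [add_dotProduct, smul_dotProduct, dot_transpose_mulVec, dot_mulVec_right]
    rw [hE]
    simp only [dotProduct, Pi.sub_apply, smul_eq_mul, ← hb]
  rw [ha] at hconv
  rw [hconv]
  exact hEnn

/-- Necessary optimality condition: existence of a dual certificate. -/
lemma lasso_cert {N Q P : ℕ} (hP : 0 < P) (Φ : Matrix (Fin Q) (Fin N) ℝ)
    (D : Matrix (Fin N) (Fin P) ℝ) (y : Fin Q → ℝ) (lam : ℝ)
    (xs : Fin N → ℝ) (hxs : IsLassoSol Φ D y lam xs) :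
    ∃ u : Fin P → ℝ, (∀ i, |u i| ≤ 1) ∧ (∀ i, u i * Dᵀ.mulVec xs i = |Dᵀ.mulVec xs i|) ∧
      Φᵀ.mulVec (Φ.mulVec xs - y) + lam • D.mulVec u = 0 := by
  classical
  set s' : Fin P → ℝ := fun i => Real.sign (Dᵀ.mulVec xs i) with hs'
  set vv : Fin N → ℝ := Φᵀ.mulVec (Φ.mulVec xs - y) + lam • D.mulVec s' with hvv
  set Ball : Set (Fin P → ℝ) :=
    Set.univ.pi (fun i => if Dᵀ.mulVec xs i = 0 then Set.Icc (-1:ℝ) 1 else {0}) with hBall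
  set C : Set (Fin N → ℝ) := (fun w => lam • D.mulVec w) '' Ball with hC
  have hcont : Continuous (fun w : Fin P → ℝ => lam • D.mulVec w) := by
    have : Continuous (D.mulVecLin) := D.mulVecLin.continuous_of_finiteDimensional
    exact this.const_smul lam
  have hBallcpt : IsCompact Ball := by
    apply isCompact_univ_pi
    intro i
    split
    · exact isCompact_Icc
    · exact isCompact_singleton
  have hCcpt : IsCompact C := hBallcpt.image hcont
  have hBallcvx : Convex ℝ Ball := by
    apply convex_pi
    intro i _
    split
    · exact convex_Icc _ _
    · exact convex_singleton _
  have hCcvx : Convex ℝ C := by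
    have := hBallcvx.linear_image (lam • D.mulVecLin)
    exact this
  have hmem : -vv ∈ C := by
    by_contra hnot
    obtain ⟨f, cst, hfa, hfx⟩ :=
      geometric_hahn_banach_closed_point hCcvx hCcpt.isClosed hnot
    set h : Fin N → ℝ := fun i => f (fun j => if i = j then 1 else 0) with hh
    have hf : ∀ z : Fin N → ℝ, f z = z ⬝ᵥ h := by
      intro z
      rw [show (f : (Fin N → ℝ) → ℝ) z = f.toLinearMap z from rfl,
        LinearMap.pi_apply_eq_sum_univ]
      simp [dotProduct, hh]
    set wsgn : Fin P → ℝ :=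
      fun j => if Dᵀ.mulVec xs j = 0 then Real.sign (Dᵀ.mulVec h j) else 0 with hwsgn
    have hwmem : wsgn ∈ Ball := by
      rw [hBall, Set.mem_univ_pi]
      intro i
      by_cases hi : Dᵀ.mulVec xs i = 0
      · simp only [hwsgn, if_pos hi]
        exact Set.mem_Icc.2 (abs_le.1 (rabs_sign_le _))
      · simp [hwsgn, if_neg hi]
    have hval : f (lam • D.mulVec wsgn)
        = lam * ∑ j, (if Dᵀ.mulVec xs j = 0 then |Dᵀ.mulVec h j| else 0) := by
      rw [hf, smul_dotProduct, dot_mulVec_right]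
      simp only [smul_eq_mul]
      congr 1
      rw [dotProduct]
      apply Finset.sum_congr rfl
      intro j _
      by_cases hj : Dᵀ.mulVec xs j = 0
      · simp [hwsgn, if_pos hj, rsign_mul_self]
      · simp [hwsgn, if_neg hj]
    have h1 : f (lam • D.mulVec wsgn) < cst := hfa _ ⟨wsgn, hwmem, rfl⟩
    have h2 : cst < f (-vv) := hfx
    rw [hval] at h1
    rw [hf] at h2
    have h3 := lasso_varineq hP Φ D y lam xs hxs h
    rw [← hs', ← hvv] at h3
    rw [neg_dotProduct] at h2
    linarith
  obtain ⟨w, hwB, hweq⟩ := hmem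
  simp only [] at hweq
  refine ⟨s' + w, ?_, ?_, ?_⟩
  · intro i
    have := hwB i (Set.mem_univ i)
    by_cases hi : Dᵀ.mulVec xs i = 0
    · simp only [if_pos hi] at this
      simp only [Pi.add_apply, hs', hi, Real.sign_zero, zero_add]
      exact abs_le.2 this
    · simp only [if_neg hi, Set.mem_singleton_iff] at this
      simp only [Pi.add_apply, this, add_zero]
      exact rabs_sign_le _
  · intro i
    by_cases hi : Dᵀ.mulVec xs i = 0
    · simp [hi]
    · have := hwB i (Set.mem_univ i)
      simp only [if_neg hi, Set.mem_singleton_iff] at this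
      simp only [Pi.add_apply, this, add_zero, hs']
      exact rsign_mul_self _
  · rw [Matrix.mulVec_add, smul_add]
    have hre : Φᵀ.mulVec (Φ.mulVec xs - y) + (lam • D.mulVec s' + lam • D.mulVec w)
        = vv + lam • D.mulVec w := by rw [hvv]; abel
    rw [hre, hweq]
    abel

lemma projG_eq_of_orth {n : ℕ} (G : Submodule ℝ (Fin n → ℝ)) (v w : Fin n → ℝ)
    (h : ∀ g ∈ G, ∑ i, (v i - w i) * g i = 0) : projG G v = projG G w := by
  unfold projG
  congr 1
  set K := (G.map ((EuclideanSpace.equiv (Fin n) ℝ).symm.toLinearEquiv :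
      (Fin n → ℝ) →ₗ[ℝ] EuclideanSpace ℝ (Fin n))) with hK
  have hmem : (EuclideanSpace.equiv (Fin n) ℝ).symm v
      - (EuclideanSpace.equiv (Fin n) ℝ).symm w ∈ Kᗮ := by
    rw [Submodule.mem_orthogonal]
    rintro u hu
    rw [hK, Submodule.mem_map] at hu
    obtain ⟨g, hg, rfl⟩ := hu
    rw [PiLp.inner_apply]
    simp only [RCLike.inner_apply, conj_trivial]
    refine Eq.trans (Finset.sum_congr rfl fun i _ => mul_comm _ _) ?_
    calc ∑ i, (((EuclideanSpace.equiv (Fin n) ℝ).symm.toLinearEquiv :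
          (Fin n → ℝ) →ₗ[ℝ] EuclideanSpace ℝ (Fin n)) g) i
          * (((EuclideanSpace.equiv (Fin n) ℝ).symm v
            - (EuclideanSpace.equiv (Fin n) ℝ).symm w) i)
        = ∑ i, g i * (v i - w i) := by
          apply Finset.sum_congr rfl; intro i _; rfl
      _ = ∑ i, (v i - w i) * g i := by apply Finset.sum_congr rfl; intro i _; ring
      _ = 0 := h g hg
  have hz := sub_eq_zero.1 (by
    rw [← map_sub (Submodule.orthogonalProjection K)]
    exact Submodule.orthogonalProjectionOnto_apply_of_mem_orthogonal hmem)
  exact congrArg _ hz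

lemma gram_inv {N Q r : ℕ} (Φ : Matrix (Fin Q) (Fin N) ℝ) (U : Matrix (Fin N) (Fin r) ℝ)
    (hinj : ∀ a : Fin r → ℝ, Φ.mulVec (U.mulVec a) = 0 → U.mulVec a = 0)
    (hU : ∀ a : Fin r → ℝ, U.mulVec a = 0 → a = 0) :
    (Uᵀ * Φᵀ * Φ * U)⁻¹ * (Uᵀ * Φᵀ * Φ * U) = 1 ∧
    (Uᵀ * Φᵀ * Φ * U) * (Uᵀ * Φᵀ * Φ * U)⁻¹ = 1 := by
  set M := Uᵀ * Φᵀ * Φ * U with hM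
  have hMform : M = (Φ * U)ᵀ * (Φ * U) := by
    rw [hM, Matrix.transpose_mul, Matrix.mul_assoc, Matrix.mul_assoc]
  have hker : ∀ a, M.mulVec a = 0 → a = 0 := by
    intro a hMa
    have h0 : a ⬝ᵥ M.mulVec a = 0 := by rw [hMa]; simp
    have hexp : a ⬝ᵥ M.mulVec a
        = ((Φ * U).mulVec a) ⬝ᵥ ((Φ * U).mulVec a) := by
      rw [hMform, ← Matrix.mulVec_mulVec, dotProduct_comm,
        dot_transpose_mulVec]
    rw [hexp] at h0
    have hz : (Φ * U).mulVec a = 0 := by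
      funext q
      have hsum : ∑ i, ((Φ * U).mulVec a i)^2 = 0 := by
        rw [← h0, dotProduct]; apply Finset.sum_congr rfl; intro i _; ring
      have := (Finset.sum_eq_zero_iff_of_nonneg (fun i _ => sq_nonneg _)).1 hsum q
        (Finset.mem_univ q)
      exact pow_eq_zero_iff (n := 2) (by norm_num) |>.1 this
    rw [← Matrix.mulVec_mulVec] at hz
    exact hU a (hinj a hz)
  have hMinj : Function.Injective M.mulVec := by
    intro a b hab
    have h1 : M.mulVec (a - b) = 0 := by rw [Matrix.mulVec_sub, hab]; simp
    exact sub_eq_zero.1 (hker _ h1)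
  have hdet : IsUnit M.det :=
    (Matrix.isUnit_iff_isUnit_det M).1 ((Matrix.mulVec_injective_iff_isUnit).1 hMinj)
  exact ⟨Matrix.nonsing_inv_mul M hdet, Matrix.mul_nonsing_inv M hdet⟩

lemma mem_GJ_iff {N P : ℕ} (D : Matrix (Fin N) (Fin P) ℝ) (J : Set (Fin P)) (x : Fin N → ℝ) :
    x ∈ GJ D J ↔ ∀ j ∈ J, Dᵀ.mulVec x j = 0 := Iff.rfl

lemma mulVec_eq_sum_cols {N r : ℕ} (U : Matrix (Fin N) (Fin r) ℝ) (a : Fin r → ℝ) :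
    U.mulVec a = ∑ k, a k • (fun i => U i k) := by
  funext i
  rw [Matrix.mulVec, dotProduct]
  rw [Finset.sum_apply]
  apply Finset.sum_congr rfl
  intro k _
  simp [mul_comm]

end Helpers

/-- Local affine parameterization: for `(y, λ) ∉ H` and a solution `x⋆` of `(P_λ(y))`
with cosupport `J` satisfying `(H_J)`, the map
`(ȳ, λ̄) ↦ A^[J] Φ* ȳ − λ̄ A^[J] D_I s_I` yields solutions of `(P_{λ̄}(ȳ))` on an open
neighborhood of `(y, λ)` in `ℝ^Q × ℝ₊`. -/
theorem lasso_local_affine_parameterization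
    {N Q P : ℕ} (hN : 0 < N) (hQ : 0 < Q) (hP : 0 < P)
    (Φ : Matrix (Fin Q) (Fin N) ℝ) (D : Matrix (Fin N) (Fin P) ℝ)
    (hH0 : ∀ x : Fin N → ℝ, Φ.mulVec x = 0 → Dᵀ.mulVec x = 0 → x = 0)
    (AJ : Set (Fin P) → Matrix (Fin N) (Fin N) ℝ) (hAJ : IsAJChoice Φ D AJ)
    (y : Fin Q → ℝ) (lam : ℝ) (hlam : 0 < lam)
    (hyH : (y, lam) ∉ transitionSpace Φ D AJ)
    (xs : Fin N → ℝ) (hxs : IsLassoSol Φ D y lam xs)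
    (J : Set (Fin P)) (hJ : J = {j | Dᵀ.mulVec xs j = 0})
    (hHJ : HJcond Φ D J) :
    ∃ B : Set ((Fin Q → ℝ) × ℝ), IsOpen B ∧ (y, lam) ∈ B ∧
      ∀ p ∈ B, 0 ≤ p.2 →
        IsLassoSol Φ D p.1 p.2
          ((AJ J).mulVec (Φᵀ.mulVec p.1)
            - p.2 • (AJ J).mulVec (D.mulVec (fun i => Real.sign (Dᵀ.mulVec xs i)))) := by
  classical
  obtain ⟨r, U, ⟨hUind, hUspan⟩, hAJeq⟩ := hAJ J hHJ
  set s' : Fin P → ℝ := fun i => Real.sign (Dᵀ.mulVec xs i) with hs'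
  set A : Matrix (Fin N) (Fin N) ℝ := AJ J with hA
  set M : Matrix (Fin r) (Fin r) ℝ := Uᵀ * Φᵀ * Φ * U with hM
  have hAform : A = U * M⁻¹ * Uᵀ := by rw [hAJeq, hM]; rfl
  have hcol : ∀ k, (fun i => U i k) ∈ GJ D J := by
    intro k
    rw [← hUspan]
    exact Submodule.subset_span ⟨k, rfl⟩
  have hUmem : ∀ a : Fin r → ℝ, U.mulVec a ∈ GJ D J := by
    intro a
    rw [mulVec_eq_sum_cols]
    exact Submodule.sum_mem _ (fun k _ => Submodule.smul_mem _ _ (hcol k))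
  have hUinj : ∀ a : Fin r → ℝ, U.mulVec a = 0 → a = 0 := by
    intro a ha0
    have := Fintype.linearIndependent_iff.1 hUind a
      (by rw [← mulVec_eq_sum_cols]; exact ha0)
    funext k; exact this k
  have hΦUinj : ∀ a : Fin r → ℝ, Φ.mulVec (U.mulVec a) = 0 → U.mulVec a = 0 :=
    fun a h0 => hHJ _ h0 (hUmem a)
  obtain ⟨hMl, hMr⟩ := gram_inv Φ U hΦUinj hUinj
  rw [← hM] at hMl hMr
  have hAGJ : ∀ z : Fin N → ℝ, A.mulVec z ∈ GJ D J := by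
    intro z
    rw [hAform, ← Matrix.mulVec_mulVec, ← Matrix.mulVec_mulVec]
    exact hUmem _
  have hUD : ∀ w : Fin P → ℝ, (∀ j, w j ≠ 0 → j ∈ J) → Uᵀ.mulVec (D.mulVec w) = 0 := by
    intro w hw
    funext k
    have hstep : Uᵀ.mulVec (D.mulVec w) k = (Dᵀ.mulVec (fun i => U i k)) ⬝ᵥ w := by
      have e1 : Uᵀ.mulVec (D.mulVec w) k = (fun i => U i k) ⬝ᵥ (D.mulVec w) := by
        rw [Matrix.mulVec]
        rfl
      rw [e1, Matrix.dotProduct_mulVec, ← Matrix.mulVec_transpose]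
    rw [hstep]
    rw [dotProduct]
    apply Finset.sum_eq_zero
    intro j _
    by_cases hj : w j = 0
    · rw [hj, mul_zero]
    · rw [hcol k j (hw j hj), zero_mul]
  obtain ⟨u₀, hu0abs, hu0sgn, hu0eq⟩ := lasso_cert hP Φ D y lam xs hxs
  have hu0I : ∀ i, Dᵀ.mulVec xs i ≠ 0 → u₀ i = s' i := by
    intro i hi
    have h1 := hu0sgn i
    have h2 : s' i * Dᵀ.mulVec xs i = |Dᵀ.mulVec xs i| := rsign_mul_self _
    exact mul_right_cancel₀ hi (h1.trans h2.symm)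
  have hxsG : xs ∈ GJ D J := by
    rw [mem_GJ_iff]
    intro j hj
    rw [hJ] at hj
    exact hj
  obtain ⟨a, haeq⟩ : ∃ a, U.mulVec a = xs := by
    have hmem : xs ∈ Submodule.span ℝ (Set.range fun k : Fin r => (fun i => U i k)) := by
      rw [hUspan]; exact hxsG
    obtain ⟨c, hc⟩ := (Submodule.mem_span_range_iff_exists_fun ℝ).1 hmem
    exact ⟨c, by rw [mulVec_eq_sum_cols]; exact hc⟩
  set uJ : Fin P → ℝ := u₀ - s' with huJ
  have huJsupp : ∀ j, uJ j ≠ 0 → j ∈ J := by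
    intro j hj
    by_contra hjJ
    have hne : Dᵀ.mulVec xs j ≠ 0 := by
      intro h0; exact hjJ (by rw [hJ]; exact h0)
    exact hj (by simp [huJ, hu0I j hne])
  have huJD : D.mulVec uJ = D.mulVec u₀ - D.mulVec s' := by
    rw [huJ, Matrix.mulVec_sub]
  -- x⋆ equals the affine formula at (y, lam)
  have e2 : Uᵀ.mulVec (Φᵀ.mulVec (Φ.mulVec xs)) = M.mulVec a := by
    rw [← haeq]
    simp only [Matrix.mulVec_mulVec]
    rw [hM, ← Matrix.mul_assoc, ← Matrix.mul_assoc]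
  have e1 : Uᵀ.mulVec (D.mulVec u₀) = Uᵀ.mulVec (D.mulVec s') := by
    have h0 : Uᵀ.mulVec (D.mulVec uJ) = 0 := hUD _ huJsupp
    rw [huJD, Matrix.mulVec_sub, sub_eq_zero] at h0
    exact h0
  have e0 : Uᵀ.mulVec (Φᵀ.mulVec (Φ.mulVec xs)) - Uᵀ.mulVec (Φᵀ.mulVec y)
      + lam • Uᵀ.mulVec (D.mulVec u₀) = 0 := by
    have := congrArg (fun z => Uᵀ.mulVec z) hu0eq
    simpa only [Matrix.mulVec_add, Matrix.mulVec_sub, Matrix.mulVec_smul,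
      Matrix.mulVec_zero] using this
  have hMa : Uᵀ.mulVec (Φᵀ.mulVec y - lam • D.mulVec s') = M.mulVec a := by
    rw [Matrix.mulVec_sub, Matrix.mulVec_smul]
    linear_combination (norm := module) e2 + lam • e1 - e0
  have hxshat : A.mulVec (Φᵀ.mulVec y) - lam • A.mulVec (D.mulVec s') = xs := by
    have h1 : A.mulVec (Φᵀ.mulVec y) - lam • A.mulVec (D.mulVec s')
        = A.mulVec (Φᵀ.mulVec y - lam • D.mulVec s') := by
      rw [Matrix.mulVec_sub, Matrix.mulVec_smul]
    have hMM : M⁻¹.mulVec (M.mulVec a) = a := by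
      rw [Matrix.mulVec_mulVec, hMl, Matrix.one_mulVec]
    rw [h1, hAform, ← Matrix.mulVec_mulVec, ← Matrix.mulVec_mulVec, hMa, hMM, haeq]
  -- residual identity
  set Pim : Matrix (Fin N) (Fin Q) ℝ := Φᵀ * (Φ * A * Φᵀ - 1) with hPim
  set Cv : Fin N → ℝ := (Φᵀ * Φ * A - 1).mulVec (D.mulVec s') with hCv
  have hres : ∀ (yb : Fin Q → ℝ) (μ : ℝ),
      Φᵀ.mulVec (Φ.mulVec (A.mulVec (Φᵀ.mulVec yb) - μ • A.mulVec (D.mulVec s')) - yb)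
        + μ • D.mulVec s' = Pim.mulVec yb - μ • Cv := by
    intro yb μ
    rw [hPim, hCv]
    simp only [Matrix.mulVec_sub, Matrix.mulVec_smul, Matrix.sub_mulVec,
      Matrix.mul_sub, Matrix.mul_one, Matrix.sub_mul, Matrix.one_mul,
      Matrix.mulVec_mulVec, Matrix.one_mulVec, Matrix.mul_assoc]
    module
  have hbase : Pim.mulVec y - lam • Cv = -(lam • D.mulVec uJ) := by
    have h1 := hres y lam
    rw [hxshat] at h1
    linear_combination (norm := module) hu0eq - h1 + lam • huJD
  -- the saturated set K and sign vector σ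
  set Kst : Set (Fin P) := {j | j ∈ J ∧ |u₀ j| = 1} with hKst
  set σ : Fin P → ℝ := fun j => if j ∈ Kst then u₀ j else 0 with hσ
  set JK : Set (Fin P) := J \ Kst with hJK
  have hs'0 : ∀ i ∈ J, s' i = 0 := by
    intro i hi
    rw [hJ] at hi
    have hz : Dᵀ.mulVec xs i = 0 := hi
    simp [hs', hz]
  have hs'pm : ∀ i, i ∉ J → s' i = 1 ∨ s' i = -1 := by
    intro i hi
    have hne : Dᵀ.mulVec xs i ≠ 0 := fun h0 => hi (by rw [hJ]; exact h0)
    rcases lt_trichotomy (Dᵀ.mulVec xs i) 0 with h|h|h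
    · right; simp [hs', Real.sign_of_neg h]
    · exact absurd h hne
    · left; simp [hs', Real.sign_of_pos h]
  have hτsupp : ∀ j, (σ - uJ) j ≠ 0 → j ∈ JK := by
    intro j hj
    by_contra hjJK
    apply hj
    by_cases hjJ : j ∈ J
    · have hjK : j ∈ Kst := by
        by_contra hk
        exact hjJK ⟨hjJ, hk⟩
      have h1 : σ j = u₀ j := by rw [hσ]; simp [hjK]
      have h2 : uJ j = u₀ j := by
        rw [huJ]; simp [hs'0 j hjJ]
      simp [Pi.sub_apply, h1, h2]
    · have h1 : σ j = 0 := by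
        rw [hσ]
        have : j ∉ Kst := fun hk => hjJ hk.1
        simp [this]
      have h2 : uJ j = 0 := by
        by_contra h2
        exact hjJ (huJsupp j h2)
      simp [Pi.sub_apply, h1, h2]
  -- membership in the transition-space stratum forces the range inclusion
  have hrangeIncl : Set.range Pim.mulVec ⊆ colSpan D JK := by
    by_contra hnr
    apply hyH
    refine ⟨le_of_lt hlam, J, Kst, s', σ, hHJ, fun j hj => hj.1, ?_, hs'pm, hs'0, ?_, ?_, ?_⟩
    · rw [← hA, ← hPim, ← hJK]
      exact hnr
    · intro i hi
      have := hi.2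
      have h01 : u₀ i = 1 ∨ u₀ i = -1 := (abs_eq (by norm_num)).1 this
      rw [hσ]; simp only [if_pos hi]
      exact h01
    · intro i hi
      rw [hσ]; simp [hi]
    · rw [← hA, ← hJK, ← hCv, ← hPim]
      apply projG_eq_of_orth
      intro g hg
      have hvec : Pim.mulVec y - lam • (Cv - D.mulVec σ) = lam • D.mulVec (σ - uJ) := by
        have hms : D.mulVec (σ - uJ) = D.mulVec σ - D.mulVec uJ := Matrix.mulVec_sub _ _ _
        linear_combination (norm := module) hbase - lam • hms
      have hterm : ∀ i, Pim.mulVec y i - (lam • (Cv - D.mulVec σ)) i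
          = lam * D.mulVec (σ - uJ) i := by
        intro i
        have := congrFun hvec i
        simpa using this
      calc ∑ i, (Pim.mulVec y i - (lam • (Cv - D.mulVec σ)) i) * g i
          = lam * ((σ - uJ) ⬝ᵥ Dᵀ.mulVec g) := by
            rw [← dot_mulVec_right, dotProduct, Finset.mul_sum]
            apply Finset.sum_congr rfl
            intro i _
            rw [hterm i]; ring
        _ = 0 := by
            rw [dotProduct]
            rw [Finset.sum_eq_zero, mul_zero]
            intro j _
            by_cases hj : (σ - uJ) j = 0
            · rw [hj, zero_mul]
            · rw [hg j (hτsupp j hj), mul_zero]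
  -- linear right inverse of D restricted to columns in J \ K
  set maskL : (Fin P → ℝ) →ₗ[ℝ] (Fin P → ℝ) :=
    { toFun := fun v j => if j ∈ JK then v j else 0,
      map_add' := by intro v w; funext j; by_cases hj : j ∈ JK <;> simp [hj]
      map_smul' := by intro c v; funext j; by_cases hj : j ∈ JK <;> simp [hj] } with hmaskL
  have hmaskapp : ∀ (v : Fin P → ℝ) j, maskL v j = if j ∈ JK then v j else 0 :=
    fun v j => rfl
  set T : (Fin P → ℝ) →ₗ[ℝ] (Fin N → ℝ) := D.mulVecLin.comp maskL with hT
  have hTapp : ∀ v, T v = D.mulVec (maskL v) := fun v => rfl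
  have hcolS : colSpan D JK ⊆ (LinearMap.range T : Set (Fin N → ℝ)) := by
    rintro z ⟨v, hv0, rfl⟩
    refine ⟨v, ?_⟩
    have hmv : maskL v = v := by
      funext j
      rw [hmaskapp]
      by_cases hj : j ∈ JK
      · rw [if_pos hj]
      · rw [if_neg hj, hv0 j hj]
    rw [hTapp, hmv]
  have hrange' : ∀ z : Fin Q → ℝ, Pim.mulVec z ∈ LinearMap.range T :=
    fun z => hcolS (hrangeIncl ⟨z, rfl⟩)
  obtain ⟨g, hg⟩ := T.rangeRestrict.exists_rightInverse_of_surjective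
      (LinearMap.range_eq_top.2 T.surjective_rangeRestrict)
  obtain ⟨S', hcompl⟩ := Submodule.exists_isCompl (LinearMap.range T)
  set prj := (LinearMap.range T).linearProjOfIsCompl S' hcompl with hprj
  set W : (Fin N → ℝ) →ₗ[ℝ] (Fin P → ℝ) := g.comp prj with hW
  have hWsec : ∀ z, ∀ hz : z ∈ LinearMap.range T, T (W z) = z := by
    intro z hz
    have h1 : prj z = ⟨z, hz⟩ := by
      have := Submodule.projectionOnto_apply_left hcompl ⟨z, hz⟩
      exact this
    have h2 := congrArg (fun φ : LinearMap.range T →ₗ[ℝ] LinearMap.range T =>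
      φ (⟨z, hz⟩ : LinearMap.range T)) hg
    have h3 : T (g ⟨z, hz⟩) = z := congrArg Subtype.val h2
    rw [hW]
    simp only [LinearMap.comp_apply, h1]
    exact h3
  set Δf : (Fin Q → ℝ) × ℝ → (Fin N → ℝ) :=
    fun p => lam⁻¹ • Pim.mulVec y - (p.2)⁻¹ • Pim.mulVec p.1 with hΔf
  have hΔS : ∀ p, Δf p ∈ LinearMap.range T := fun p =>
    Submodule.sub_mem _ (Submodule.smul_mem _ _ (hrange' y))
      (Submodule.smul_mem _ _ (hrange' p.1))
  set vp : (Fin Q → ℝ) × ℝ → (Fin P → ℝ) := fun p => maskL (W (Δf p)) with hvp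
  have hvp0 : ∀ p j, j ∉ JK → vp p j = 0 := by
    intro p j hj
    rw [hvp]
    simp only []
    rw [hmaskapp, if_neg hj]
  have hDvp : ∀ p, D.mulVec (vp p) = Δf p := by
    intro p
    have h1 : D.mulVec (vp p) = T (W (Δf p)) := by
      rw [hTapp]
    rw [h1]
    exact hWsec _ (hΔS p)
  -- continuity facts
  have hWcont : Continuous (fun z : Fin N → ℝ => maskL (W z)) :=
    (maskL.comp W).continuous_of_finiteDimensional
  set U0 : Set ((Fin Q → ℝ) × ℝ) := {p | 0 < p.2} with hU0
  have hU0open : IsOpen U0 := isOpen_lt continuous_const continuous_snd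
  have hPimcont : Continuous (fun p : (Fin Q → ℝ) × ℝ => Pim.mulVec p.1) := by
    have h1 : Continuous (fun z : Fin Q → ℝ => Pim.mulVec z) := by
      exact Pim.mulVecLin.continuous_of_finiteDimensional
    exact h1.comp continuous_fst
  have hΔcont : ContinuousOn Δf U0 := by
    apply ContinuousOn.sub continuousOn_const
    apply ContinuousOn.fun_smul
    · exact (continuous_snd.continuousOn).inv₀ (fun p hp => ne_of_gt hp)
    · exact hPimcont.continuousOn
  have hvpcont : ContinuousOn vp U0 := hWcont.comp_continuousOn hΔcont
  set xhat : (Fin Q → ℝ) × ℝ → (Fin N → ℝ) :=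
    fun p => A.mulVec (Φᵀ.mulVec p.1) - p.2 • A.mulVec (D.mulVec s') with hxhat
  have hxhatcont : Continuous xhat := by
    apply Continuous.sub
    · have hA1 : Continuous (fun z : Fin N → ℝ => A.mulVec z) := by
        exact A.mulVecLin.continuous_of_finiteDimensional
      have hA2 : Continuous (fun z : Fin Q → ℝ => Φᵀ.mulVec z) := by
        exact Φᵀ.mulVecLin.continuous_of_finiteDimensional
      exact (hA1.comp hA2).comp continuous_fst
    · exact continuous_snd.smul continuous_const
  have htcont : Continuous (fun p => Dᵀ.mulVec (xhat p)) := by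
    have h1 : Continuous (fun z : Fin N → ℝ => Dᵀ.mulVec z) := by
      exact Dᵀ.mulVecLin.continuous_of_finiteDimensional
    exact h1.comp hxhatcont
  -- the neighborhood
  set Bs : Fin P → Set ((Fin Q → ℝ) × ℝ) := fun i =>
    if i ∈ JK then U0 ∩ (fun p => vp p i) ⁻¹' {x : ℝ | |x| < 1 - |u₀ i|}
    else if i ∈ J then Set.univ
    else {p | 0 < s' i * Dᵀ.mulVec (xhat p) i} with hBs
  refine ⟨U0 ∩ ⋂ i, Bs i, ?_, ?_, ?_⟩
  · apply IsOpen.inter hU0open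
    apply isOpen_iInter_of_finite
    intro i
    rw [hBs]
    simp only []
    split_ifs with h1 h2
    · apply ContinuousOn.isOpen_inter_preimage _ hU0open
        (by exact isOpen_lt continuous_abs continuous_const)
      exact (continuous_apply i).comp_continuousOn hvpcont
    · exact isOpen_univ
    · exact isOpen_lt continuous_const
        (continuous_const.mul ((continuous_apply i).comp htcont))
  · refine ⟨hlam, ?_⟩
    rw [Set.mem_iInter]
    intro i
    rw [hBs]
    simp only []
    split_ifs with h1 h2
    · refine ⟨hlam, ?_⟩
      have hΔ0 : Δf (y, lam) = 0 := by
        rw [hΔf]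
        simp
      have hvpz : vp (y, lam) i = 0 := by
        rw [hvp]
        simp only [hΔ0, map_zero]
        rfl
      have hu0lt : |u₀ i| < 1 := by
        apply lt_of_le_of_ne (hu0abs i)
        intro he
        exact h1.2 ⟨h1.1, he⟩
      simp only [Set.mem_preimage, Set.mem_setOf_eq, hvpz, abs_zero]
      linarith
    · trivial
    · have hne : Dᵀ.mulVec xs i ≠ 0 := fun h0 => h2 (by rw [hJ]; exact h0)
      have hx : xhat (y, lam) = xs := hxshat
      rw [Set.mem_setOf_eq, hx, rsign_mul_self]
      exact abs_pos.2 hne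
  · rintro p hp -
    obtain ⟨hpU0, hpall⟩ := hp
    have hp2 : (0:ℝ) < p.2 := hpU0
    rw [Set.mem_iInter] at hpall
    set ut : Fin P → ℝ := u₀ + vp p with hut
    have hres' := hres p.1 p.2
    have hDut : D.mulVec ut = D.mulVec u₀ + Δf p := by
      rw [hut, Matrix.mulVec_add, hDvp p]
    have hΔexp : p.2 • Δf p = p.2 • Cv - p.2 • D.mulVec uJ - Pim.mulVec p.1 := by
      rw [hΔf]
      simp only []
      rw [smul_sub, smul_smul, smul_smul, mul_inv_cancel₀ (ne_of_gt hp2), one_smul]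
      have hPy : Pim.mulVec y = lam • Cv - lam • D.mulVec uJ := by
        linear_combination (norm := module) hbase
      rw [hPy, smul_sub, smul_smul, smul_smul, mul_assoc,
        inv_mul_cancel₀ (ne_of_gt hlam), mul_one]
    have hcert : Φᵀ.mulVec (Φ.mulVec (A.mulVec (Φᵀ.mulVec p.1)
        - p.2 • A.mulVec (D.mulVec s')) - p.1) + p.2 • D.mulVec ut = 0 := by
      linear_combination (norm := module) hres' + p.2 • hDut + hΔexp - p.2 • huJD
    apply lasso_suff Φ D p.1 p.2 (le_of_lt hp2) _ ut hcert
    · intro i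
      by_cases hi : i ∈ JK
      · have hb := hpall i
        rw [hBs] at hb
        simp only [if_pos hi] at hb
        have hb2 : |vp p i| < 1 - |u₀ i| := hb.2
        have : ut i = u₀ i + vp p i := rfl
        rw [this]
        calc |u₀ i + vp p i| ≤ |u₀ i| + |vp p i| := abs_add_le _ _
          _ ≤ 1 := by linarith
      · have : ut i = u₀ i := by
          have hz := hvp0 p i hi
          rw [hut]; simp [hz]
        rw [this]
        exact hu0abs i
    · intro i
      by_cases hi : i ∈ J
      · have hmem : (A.mulVec (Φᵀ.mulVec p.1) - p.2 • A.mulVec (D.mulVec s')) ∈ GJ D J :=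
          Submodule.sub_mem _ (hAGJ _) (Submodule.smul_mem _ _ (hAGJ _))
        have hz := (mem_GJ_iff D J _).1 hmem i hi
        rw [hz]
        simp
      · have hiJK : i ∉ JK := fun hk => hi hk.1
        have hne : Dᵀ.mulVec xs i ≠ 0 := fun h0 => hi (by rw [hJ]; exact h0)
        have huts : ut i = s' i := by
          have hz := hvp0 p i hiJK
          rw [hut]; simp [hz, hu0I i hne]
        have hb := hpall i
        rw [hBs] at hb
        simp only [if_neg hiJK, if_neg hi] at hb
        have hb' : 0 < s' i * Dᵀ.mulVec (xhat p) i := hb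
        have hxp : xhat p = A.mulVec (Φᵀ.mulVec p.1) - p.2 • A.mulVec (D.mulVec s') := rfl
        rw [hxp] at hb'
        rw [huts]
        have habs1 : |s' i| = 1 := by
          rcases hs'pm i hi with h|h <;> simp [h]
        set t := Dᵀ.mulVec (A.mulVec (Φᵀ.mulVec p.1) - p.2 • A.mulVec (D.mulVec s')) i with htdef
        calc s' i * t = |s' i * t| := (abs_of_pos hb').symm
          _ = |s' i| * |t| := abs_mul _ _
          _ = |t| := by rw [habs1, one_mul]
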